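/- (Main bound, Theorem 4) For all f ∈ F and g ∈ G, the target risk is bounded as R_T(fg) ≤ R_S(fg) + d_{FΔF}(p_S^g(Z), p_T^g(Z)) + d_{F_{GΔG}}(p_S, p_T) + λ_{FG}(g), where λ_{FG}(g) = inf_{f' ∈ F, g' ∈ G} [2 R_S(f'g) + R_S(f'g') + R_T(f'g')]. (In a formal version, replace the infimum by: for all f* ∈ F, g* ∈ G, R_T(fg) ≤ R_S(fg) + d_{FΔF}(p_S^g, p_T^g) + d_{F_{GΔG}}(p_S,p_T) + 2R_S(f*g) + R_S(f*g*) + R_T(f*g*).) -/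

import Mathlib

open MeasureTheory

/-- Zero-one loss on binary labels. -/
noncomputable def zoLoss (a b : Bool) : ℝ := if a = b then 0 else 1

/-- Expected disagreement between two binary hypotheses under a distribution on `X`. -/
noncomputable def riskD {X : Type*} [MeasurableSpace X] (μ : Measure X)
    (h h' : X → Bool) : ℝ := ∫ x, zoLoss (h x) (h' x) ∂μ

/-- Risk of a hypothesis against true labels, for a joint distribution on `X × Bool`. -/
noncomputable def riskJ {X : Type*} [MeasurableSpace X] (μ : Measure (X × Bool))
    (h : X → Bool) : ℝ := ∫ p, zoLoss (h p.1) p.2 ∂μ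

/-- The `HΔH`-divergence between two distributions on `X`. -/
noncomputable def hDiv {X : Type*} [MeasurableSpace X] (μ ν : Measure X)
    (H : Set (X → Bool)) : ℝ :=
  sSup {r | ∃ h ∈ H, ∃ h' ∈ H, r = |riskD μ h h' - riskD ν h h'|}

/-- The `F_{GΔG}`-divergence between two distributions on `X`. -/
noncomputable def fggDiv {X Z : Type*} [MeasurableSpace X] (μ ν : Measure X)
    (F : Set (Z → Bool)) (G : Set (X → Z)) : ℝ :=
  sSup {r | ∃ f ∈ F, ∃ g ∈ G, ∃ g' ∈ G,
    r = |riskD μ (f ∘ g) (f ∘ g') - riskD ν (f ∘ g) (f ∘ g')|}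

lemma zo_nonneg (a b : Bool) : 0 ≤ zoLoss a b := by
  unfold zoLoss; split <;> norm_num

lemma zo_le_one (a b : Bool) : zoLoss a b ≤ 1 := by
  unfold zoLoss; split <;> norm_num

lemma zo_triangle (a b c : Bool) : zoLoss a c ≤ zoLoss a b + zoLoss b c := by
  cases a <;> cases b <;> cases c <;> simp [zoLoss]

lemma zo_symm (a b : Bool) : zoLoss a b = zoLoss b a := by
  cases a <;> cases b <;> simp [zoLoss]

lemma meas_zo {X : Type*} [MeasurableSpace X] {h h' : X → Bool}
    (mh : Measurable h) (mh' : Measurable h') :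
    Measurable fun x => zoLoss (h x) (h' x) := by
  have : (fun x => zoLoss (h x) (h' x))
      = (fun p : Bool × Bool => zoLoss p.1 p.2) ∘ (fun x => (h x, h' x)) := rfl
  rw [this]
  exact (measurable_of_countable _).comp (mh.prodMk mh')

lemma integrable_zo {X : Type*} [MeasurableSpace X] (μ : Measure X) [IsFiniteMeasure μ]
    {h h' : X → Bool} (mh : Measurable h) (mh' : Measurable h') :
    Integrable (fun x => zoLoss (h x) (h' x)) μ := by
  refine Integrable.mono' (integrable_const 1) (meas_zo mh mh').aestronglyMeasurable ?_
  filter_upwards with x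
  rw [Real.norm_eq_abs, abs_of_nonneg (zo_nonneg _ _)]
  exact zo_le_one _ _

lemma integrable_zoJ {X : Type*} [MeasurableSpace X] (μ : Measure (X × Bool))
    [IsFiniteMeasure μ] {h : X → Bool} (mh : Measurable h) :
    Integrable (fun p : X × Bool => zoLoss (h p.1) p.2) μ :=
  integrable_zo μ (mh.comp measurable_fst) measurable_snd

lemma riskD_nonneg {X : Type*} [MeasurableSpace X] (μ : Measure X) (h h' : X → Bool) :
    0 ≤ riskD μ h h' :=
  integral_nonneg fun x => zo_nonneg _ _

lemma riskD_le_one {X : Type*} [MeasurableSpace X] (μ : Measure X) [IsProbabilityMeasure μ]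
    {h h' : X → Bool} (mh : Measurable h) (mh' : Measurable h') :
    riskD μ h h' ≤ 1 := by
  have := integral_mono (integrable_zo μ mh mh') (integrable_const (1:ℝ))
    (fun x => zo_le_one (h x) (h' x))
  simpa [riskD] using this

lemma riskD_map {X Z : Type*} [MeasurableSpace X] [MeasurableSpace Z]
    (μ : Measure X) {g : X → Z} (mg : Measurable g)
    {f f' : Z → Bool} (mf : Measurable f) (mf' : Measurable f') :
    riskD (μ.map g) f f' = riskD μ (f ∘ g) (f' ∘ g) := by
  unfold riskD
  rw [integral_map mg.aemeasurable (meas_zo mf mf').aestronglyMeasurable]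
  rfl

lemma riskD_fst {X : Type*} [MeasurableSpace X] (μ : Measure (X × Bool))
    {h h' : X → Bool} (mh : Measurable h) (mh' : Measurable h') :
    riskD (μ.map Prod.fst) h h' = ∫ p, zoLoss (h p.1) (h' p.1) ∂μ := by
  unfold riskD
  rw [integral_map measurable_fst.aemeasurable (meas_zo mh mh').aestronglyMeasurable]

/-- joint triangle: R(h) ≤ disagreement(h,h') + R(h') -/
lemma riskJ_triangle {X : Type*} [MeasurableSpace X] (μ : Measure (X × Bool))
    [IsProbabilityMeasure μ] {h h' : X → Bool} (mh : Measurable h) (mh' : Measurable h') :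
    riskJ μ h ≤ riskD (μ.map Prod.fst) h h' + riskJ μ h' := by
  rw [riskD_fst μ mh mh']
  unfold riskJ
  have hint : Integrable (fun p : X × Bool => zoLoss (h p.1) (h' p.1)) μ :=
    integrable_zo μ (mh.comp measurable_fst) (mh'.comp measurable_fst)
  rw [← integral_add hint (integrable_zoJ μ mh')]
  exact integral_mono (integrable_zoJ μ mh) (hint.add (integrable_zoJ μ mh'))
    (fun p => zo_triangle (h p.1) (h' p.1) p.2)

/-- marginal triangle: disagreement(h,h') ≤ R(h) + R(h') -/
lemma riskD_le_riskJ {X : Type*} [MeasurableSpace X] (μ : Measure (X × Bool))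
    [IsProbabilityMeasure μ] {h h' : X → Bool} (mh : Measurable h) (mh' : Measurable h') :
    riskD (μ.map Prod.fst) h h' ≤ riskJ μ h + riskJ μ h' := by
  rw [riskD_fst μ mh mh']
  unfold riskJ
  have hint : Integrable (fun p : X × Bool => zoLoss (h p.1) (h' p.1)) μ :=
    integrable_zo μ (mh.comp measurable_fst) (mh'.comp measurable_fst)
  rw [← integral_add (integrable_zoJ μ mh) (integrable_zoJ μ mh')]
  refine integral_mono hint ((integrable_zoJ μ mh).add (integrable_zoJ μ mh')) (fun p => ?_)
  calc zoLoss (h p.1) (h' p.1) ≤ zoLoss (h p.1) p.2 + zoLoss p.2 (h' p.1) :=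
        zo_triangle _ _ _
    _ = zoLoss (h p.1) p.2 + zoLoss (h' p.1) p.2 := by rw [zo_symm p.2]

lemma le_add_hDiv {X : Type*} [MeasurableSpace X] (μ ν : Measure X)
    [IsProbabilityMeasure μ] [IsProbabilityMeasure ν]
    (H : Set (X → Bool)) (hH : ∀ h ∈ H, Measurable h)
    {h h' : X → Bool} (hh : h ∈ H) (hh' : h' ∈ H) :
    riskD ν h h' ≤ riskD μ h h' + hDiv μ ν H := by
  have hbdd : BddAbove {r | ∃ h ∈ H, ∃ h' ∈ H, r = |riskD μ h h' - riskD ν h h'|} := by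
    refine ⟨1, fun r hr => ?_⟩
    obtain ⟨a, ha, b, hb, rfl⟩ := hr
    have h1 := riskD_le_one μ (hH a ha) (hH b hb)
    have h2 := riskD_le_one ν (hH a ha) (hH b hb)
    have h3 := riskD_nonneg μ a b
    have h4 := riskD_nonneg ν a b
    rw [abs_sub_le_iff]; constructor <;> linarith
  have hmem : |riskD μ h h' - riskD ν h h'| ∈
      {r | ∃ h ∈ H, ∃ h' ∈ H, r = |riskD μ h h' - riskD ν h h'|} :=
    ⟨h, hh, h', hh', rfl⟩
  have := le_csSup hbdd hmem
  have h5 : riskD ν h h' - riskD μ h h' ≤ |riskD μ h h' - riskD ν h h'| := by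
    rw [abs_sub_comm]; exact le_abs_self _
  unfold hDiv; linarith

lemma le_add_fggDiv {X Z : Type*} [MeasurableSpace X] [MeasurableSpace Z]
    (μ ν : Measure X) [IsProbabilityMeasure μ] [IsProbabilityMeasure ν]
    (F : Set (Z → Bool)) (G : Set (X → Z))
    (hF : ∀ f ∈ F, Measurable f) (hG : ∀ g ∈ G, Measurable g)
    {f : Z → Bool} (hf : f ∈ F) {g g' : X → Z} (hg : g ∈ G) (hg' : g' ∈ G) :
    riskD ν (f ∘ g) (f ∘ g') ≤ riskD μ (f ∘ g) (f ∘ g') + fggDiv μ ν F G := by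
  have hbdd : BddAbove {r | ∃ f ∈ F, ∃ g ∈ G, ∃ g' ∈ G,
      r = |riskD μ (f ∘ g) (f ∘ g') - riskD ν (f ∘ g) (f ∘ g')|} := by
    refine ⟨1, fun r hr => ?_⟩
    obtain ⟨a, ha, b, hb, c, hc, rfl⟩ := hr
    have m1 : Measurable (a ∘ b) := (hF a ha).comp (hG b hb)
    have m2 : Measurable (a ∘ c) := (hF a ha).comp (hG c hc)
    have h1 := riskD_le_one μ m1 m2
    have h2 := riskD_le_one ν m1 m2
    have h3 := riskD_nonneg μ (a ∘ b) (a ∘ c)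
    have h4 := riskD_nonneg ν (a ∘ b) (a ∘ c)
    rw [abs_sub_le_iff]; constructor <;> linarith
  have hmem : |riskD μ (f ∘ g) (f ∘ g') - riskD ν (f ∘ g) (f ∘ g')| ∈
      {r | ∃ f ∈ F, ∃ g ∈ G, ∃ g' ∈ G,
        r = |riskD μ (f ∘ g) (f ∘ g') - riskD ν (f ∘ g) (f ∘ g')|} :=
    ⟨f, hf, g, hg, g', hg', rfl⟩
  have := le_csSup hbdd hmem
  have h5 : riskD ν (f ∘ g) (f ∘ g') - riskD μ (f ∘ g) (f ∘ g') ≤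
      |riskD μ (f ∘ g) (f ∘ g') - riskD ν (f ∘ g) (f ∘ g')| := by
    rw [abs_sub_comm]; exact le_abs_self _
  unfold fggDiv; linarith

theorem main_bound {X Z : Type*} [MeasurableSpace X] [MeasurableSpace Z]
    (pS pT : Measure (X × Bool)) [IsProbabilityMeasure pS] [IsProbabilityMeasure pT]
    (F : Set (Z → Bool)) (G : Set (X → Z))
    (hF : ∀ f ∈ F, Measurable f) (hG : ∀ g ∈ G, Measurable g)
    (f : Z → Bool) (hf : f ∈ F) (g : X → Z) (hg : g ∈ G)
    (fstar : Z → Bool) (hfstar : fstar ∈ F) (gstar : X → Z) (hgstar : gstar ∈ G) :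
    riskJ pT (f ∘ g) ≤ riskJ pS (f ∘ g)
      + hDiv ((pS.map Prod.fst).map g) ((pT.map Prod.fst).map g) F
      + fggDiv (pS.map Prod.fst) (pT.map Prod.fst) F G
      + 2 * riskJ pS (fstar ∘ g) + riskJ pS (fstar ∘ gstar)
      + riskJ pT (fstar ∘ gstar) := by
  have mf := hF f hf
  have mfs := hF fstar hfstar
  have mg := hG g hg
  have mgs := hG gstar hgstar
  set μS := pS.map Prod.fst with hμS
  set μT := pT.map Prod.fst with hμT
  haveI : IsProbabilityMeasure μS := Measure.isProbabilityMeasure_map measurable_fst.aemeasurable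
  haveI : IsProbabilityMeasure μT := Measure.isProbabilityMeasure_map measurable_fst.aemeasurable
  haveI : IsProbabilityMeasure (μS.map g) := Measure.isProbabilityMeasure_map mg.aemeasurable
  haveI : IsProbabilityMeasure (μT.map g) := Measure.isProbabilityMeasure_map mg.aemeasurable
  -- Step A
  have stepA : riskJ pT (f ∘ g) ≤ riskD μT (f ∘ g) (fstar ∘ g) + riskJ pT (fstar ∘ g) :=
    riskJ_triangle pT (mf.comp mg) (mfs.comp mg)
  -- Step B : hDiv piece
  have hB1 : riskD μT (f ∘ g) (fstar ∘ g) = riskD (μT.map g) f fstar :=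
    (riskD_map μT mg mf mfs).symm
  have hB2 : riskD (μT.map g) f fstar ≤ riskD (μS.map g) f fstar
      + hDiv (μS.map g) (μT.map g) F :=
    le_add_hDiv (μS.map g) (μT.map g) F hF hf hfstar
  have hB3 : riskD (μS.map g) f fstar = riskD μS (f ∘ g) (fstar ∘ g) :=
    riskD_map μS mg mf mfs
  have hB4 : riskD μS (f ∘ g) (fstar ∘ g) ≤ riskJ pS (f ∘ g) + riskJ pS (fstar ∘ g) :=
    riskD_le_riskJ pS (mf.comp mg) (mfs.comp mg)
  -- Step C
  have stepC : riskJ pT (fstar ∘ g) ≤ riskD μT (fstar ∘ g) (fstar ∘ gstar)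
      + riskJ pT (fstar ∘ gstar) :=
    riskJ_triangle pT (mfs.comp mg) (mfs.comp mgs)
  have hC2 : riskD μT (fstar ∘ g) (fstar ∘ gstar) ≤ riskD μS (fstar ∘ g) (fstar ∘ gstar)
      + fggDiv μS μT F G :=
    le_add_fggDiv μS μT F G hF hG hfstar hg hgstar
  have hC3 : riskD μS (fstar ∘ g) (fstar ∘ gstar) ≤ riskJ pS (fstar ∘ g)
      + riskJ pS (fstar ∘ gstar) :=
    riskD_le_riskJ pS (mfs.comp mg) (mfs.comp mgs)
  linarith
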